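/- The map from ℂⁿ to monic complex polynomials of degree n sending (r₁,…,rₙ) to ∏(X - rᵢ), followed by extraction of the coefficient vector, is continuous, and it is invariant under permutation of (r₁,…,rₙ); hence it descends to a continuous bijection from the quotient of ℂⁿ by the symmetric group Sₙ onto ℂⁿ (the coefficient space). -/

import Mathlib

open Polynomial

-- key perm lemma
lemma key_perm {α : Type*} : ∀ {n : ℕ} (r s : Fin n → α),
    (List.ofFn r).Perm (List.ofFn s) → ∃ σ : Equiv.Perm (Fin n), r ∘ σ = s := by
  intro n
  induction n with
  | zero => intro r s _; exact ⟨1, funext fun i => i.elim0⟩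
  | succ n ih =>
    intro r s h
    have hmem : s 0 ∈ List.ofFn r := h.symm.mem_iff.mp (by simp [List.mem_ofFn])
    obtain ⟨k, hk⟩ := List.mem_ofFn.mp hmem
    set τ : Equiv.Perm (Fin (n+1)) := Equiv.swap 0 k with hτ
    have h1 : (List.ofFn (r ∘ τ)).Perm (List.ofFn s) :=
      (τ.ofFn_comp_perm r).trans h
    have h0 : (r ∘ τ) 0 = s 0 := by simp [hτ, hk]
    rw [List.ofFn_succ, List.ofFn_succ, h0] at h1
    have h2 := h1.cons_inv
    obtain ⟨σ', hσ'⟩ := ih (fun i => (r ∘ τ) i.succ) (fun i => s i.succ) h2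
    refine ⟨τ * Equiv.Perm.decomposeFin.symm (0, σ'), funext fun x => ?_⟩
    induction x using Fin.cases with
    | zero => simpa using h0
    | succ i =>
      have := congrFun hσ' i
      simpa [Equiv.Perm.decomposeFin_symm_apply_succ] using this

lemma cont_aux {n : ℕ} (t : Finset (Fin n)) :
    ∀ i : ℕ, Continuous (fun r : Fin n → ℂ => (∏ j ∈ t, (X - C (r j))).coeff i) := by
  induction t using Finset.induction_on with
  | empty => intro i; simpa using continuous_const
  | @insert a t ha ih =>
    intro i
    have key : (fun r : Fin n → ℂ => (∏ j ∈ insert a t, (X - C (r j))).coeff i) =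
        fun r => (X * ∏ j ∈ t, (X - C (r j))).coeff i - r a * (∏ j ∈ t, (X - C (r j))).coeff i := by
      funext r
      rw [Finset.prod_insert ha, sub_mul, coeff_sub, coeff_C_mul]
    rw [key]
    apply Continuous.sub
    · cases i with
      | zero =>
        simpa [Polynomial.mul_coeff_zero] using (continuous_const : Continuous fun _ : Fin n → ℂ => (0:ℂ))
      | succ i =>
        simpa [Polynomial.coeff_X_mul] using ih i
    · exact ((continuous_apply a).mul (ih i))

theorem roots_to_coeffs_continuous_perm_invariant_bijective (n : ℕ) :
    Continuous (fun r : Fin n → ℂ => fun i : Fin n => (∏ j, (X - C (r j))).coeff i) ∧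
    (∀ (σ : Equiv.Perm (Fin n)) (r : Fin n → ℂ),
      (fun i : Fin n => (∏ j, (X - C ((r ∘ σ) j))).coeff i) =
        (fun i : Fin n => (∏ j, (X - C (r j))).coeff i)) ∧
    Function.Surjective
      (fun r : Fin n → ℂ => fun i : Fin n => (∏ j, (X - C (r j))).coeff i) ∧
    (∀ r s : Fin n → ℂ,
      (fun i : Fin n => (∏ j, (X - C (r j))).coeff i) =
        (fun i : Fin n => (∏ j, (X - C (s j))).coeff i) →
      ∃ σ : Equiv.Perm (Fin n), r ∘ σ = s) := by
  have hmonic : ∀ r : Fin n → ℂ, (∏ j, (X - C (r j))).Monic :=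
    fun r => monic_prod_of_monic _ _ fun j _ => monic_X_sub_C (r j)
  have hdeg : ∀ r : Fin n → ℂ, (∏ j, (X - C (r j))).natDegree = n := by
    intro r
    rw [natDegree_prod _ _ (fun j _ => X_sub_C_ne_zero (r j))]
    simp
  have hprod_eq : ∀ r s : Fin n → ℂ,
      (fun i : Fin n => (∏ j, (X - C (r j))).coeff i) =
        (fun i : Fin n => (∏ j, (X - C (s j))).coeff i) →
      (∏ j, (X - C (r j))) = (∏ j, (X - C (s j))) := by
    intro r s h
    ext k
    rcases lt_trichotomy k n with hk | hk | hk
    · exact congrFun h ⟨k, hk⟩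
    · have h1 := (hmonic r).coeff_natDegree
      have h2 := (hmonic s).coeff_natDegree
      rw [hdeg r] at h1
      rw [hdeg s] at h2
      rw [hk, h1, h2]
    · rw [coeff_eq_zero_of_natDegree_lt (by rw [hdeg r]; exact hk),
        coeff_eq_zero_of_natDegree_lt (by rw [hdeg s]; exact hk)]
  refine ⟨?_, ?_, ?_, ?_⟩
  · exact continuous_pi fun i => cont_aux Finset.univ i
  · intro σ r
    funext i
    congr 1
    exact Equiv.prod_comp σ (fun j => X - C (r j))
  · intro a
    set p : ℂ[X] := X ^ n + ∑ i : Fin n, C (a i) * X ^ (i : ℕ) with hp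
    have hsumdeg : (∑ i : Fin n, C (a i) * X ^ (i : ℕ)).degree < (n : WithBot ℕ) := by
      apply lt_of_le_of_lt (degree_sum_le _ _)
      rw [Finset.sup_lt_iff (by exact_mod_cast WithBot.bot_lt_coe n)]
      intro i _
      exact lt_of_le_of_lt (degree_C_mul_X_pow_le _ _) (by exact_mod_cast i.isLt)
    have hpm : p.Monic := monic_X_pow_add hsumdeg
    have hpdeg : p.natDegree = n := by
      have : p.degree = n := by
        rw [hp, degree_add_eq_left_of_degree_lt (by rwa [degree_X_pow]), degree_X_pow]
      exact natDegree_eq_of_degree_eq_some this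
    have hsplit : p.Splits := IsAlgClosed.splits p
    have hcard : p.roots.card = n := by
      rw [splits_iff_card_roots.mp hsplit, hpdeg]
    have hl : p.roots.toList.length = n := by
      rw [Multiset.length_toList, hcard]
    set r : Fin n → ℂ := fun i => p.roots.toList.get (Fin.cast hl.symm i) with hr
    have hofn : List.ofFn r = p.roots.toList := by
      apply List.ext_get (by simp [hl])
      intro i h1 h2
      simp [hr]
    have hmap : (Finset.univ.val.map r : Multiset ℂ) = p.roots := by
      rw [Fin.univ_val_map, hofn, Multiset.coe_toList]
    have hprod : (∏ j, (X - C (r j))) = p := by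
      rw [← prod_multiset_X_sub_C_of_monic_of_roots_card_eq hpm (by rw [hcard, hpdeg]),
        ← hmap, Finset.prod_eq_multiset_prod, Multiset.map_map]
      rfl
    refine ⟨r, funext fun i => ?_⟩
    simp only [hprod, hp, coeff_add, coeff_X_pow, finset_sum_coeff, coeff_C_mul]
    rw [if_neg (Nat.ne_of_lt i.isLt), zero_add]
    have hiff : ∀ x : Fin n, (if (i:ℕ) = (x:ℕ) then (1:ℂ) else 0) = if i = x then 1 else 0 := by
      intro x; simp [Fin.ext_iff]
    simp only [mul_ite, mul_one, mul_zero, hiff]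
    rw [Finset.sum_ite_eq Finset.univ i a]
    simp
  · intro r s h
    have hpq := hprod_eq r s h
    have hroots : (Finset.univ.val.map r : Multiset ℂ) = Finset.univ.val.map s := by
      have h1 := roots_multiset_prod_X_sub_C (Finset.univ.val.map r)
      have h2 := roots_multiset_prod_X_sub_C (Finset.univ.val.map s)
      rw [← h1, ← h2]
      congr 1
      rw [Multiset.map_map, Multiset.map_map, ← Finset.prod_eq_multiset_prod,
        ← Finset.prod_eq_multiset_prod]
      exact hpq
    apply key_perm
    rw [← Multiset.coe_eq_coe, ← Fin.univ_val_map, ← Fin.univ_val_map]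
    exact hroots
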